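/- Let A be a linear endomorphism of a nontrivial finite-dimensional complex vector space and B a linear endomorphism of a finite-dimensional normed real vector space, and suppose there exists a constant C > 0 such that |tr(A^m)| ≤ C · ‖B^m‖ for all integers m ≥ 1, where ‖ · ‖ denotes the operator norm. Then the spectral radius of A (the maximum modulus of its complex eigenvalues) is at most limsup_{m→∞} ‖B^m‖^{1/m}. -/

import Mathlib

open Filter

section Aux
open Filter Set Metric

/-- `c ^ (1/m) → 1` for a positive constant `c`. -/
lemma aux_tendsto_rpow_inv {c : ℝ} (hc : 0 < c) :
    Tendsto (fun m : ℕ => c ^ ((m : ℝ)⁻¹)) atTop (nhds 1) := by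
  have h0 : Tendsto (fun m : ℕ => (m : ℝ)⁻¹) atTop (nhds 0) :=
    tendsto_inv_atTop_zero.comp tendsto_natCast_atTop_atTop
  have h1 : Tendsto (fun m : ℕ => Real.log c * (m : ℝ)⁻¹) atTop (nhds 0) := by
    simpa using h0.const_mul (Real.log c)
  have h2 := (Real.continuous_exp.tendsto 0).comp h1
  simp only [Function.comp_def, Real.exp_zero] at h2
  convert h2 using 2 with m
  rw [Real.rpow_def_of_pos hc]

/-- Simultaneous recurrence: for unimodular complex numbers `u i`, arbitrarily large `m`
make all `u i ^ m` close to `1`. -/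
lemma aux_pigeon {ι : Type*} [Fintype ι] (u : ι → ℂ) (hu : ∀ i, ‖u i‖ = 1)
    {δ : ℝ} (hδ : 0 < δ) (N : ℕ) (hN : 1 ≤ N) :
    ∃ m : ℕ, N ≤ m ∧ ∀ i, ‖u i ^ m - 1‖ < δ := by
  set x : ℕ → (ι → ℂ) := fun j i => u i ^ (j * N) with hx
  have hmem : ∀ j, x j ∈ closedBall (0 : ι → ℂ) 1 := by
    intro j
    rw [mem_closedBall_zero_iff]
    refine (pi_norm_le_iff_of_nonneg zero_le_one).mpr fun i => ?_
    rw [hx]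
    simp [map_pow, hu i]
  obtain ⟨L, -, φ, hφ, hcv⟩ := (isCompact_closedBall (0 : ι → ℂ) 1).tendsto_subseq hmem
  obtain ⟨J, hJ⟩ := (Metric.tendsto_atTop.mp hcv) (δ / 2) (half_pos hδ)
  have hab : φ J < φ (J + 1) := hφ (Nat.lt_succ_self J)
  have hdist : dist (x (φ (J + 1))) (x (φ J)) < δ := by
    calc dist (x (φ (J + 1))) (x (φ J)) ≤ dist (x (φ (J + 1))) L + dist (x (φ J)) L :=
          dist_triangle_right _ _ _
      _ < δ / 2 + δ / 2 := add_lt_add (hJ (J + 1) (Nat.le_succ J)) (hJ J le_rfl)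
      _ = δ := add_halves δ
  refine ⟨(φ (J + 1) - φ J) * N, ?_, fun i => ?_⟩
  · calc N = 1 * N := (one_mul N).symm
      _ ≤ (φ (J + 1) - φ J) * N := Nat.mul_le_mul_right N (by omega)
  · have hcoord : dist (x (φ (J + 1)) i) (x (φ J) i) < δ :=
      lt_of_le_of_lt (dist_le_pi_dist _ _ i) hdist
    have key : u i ^ (φ (J + 1) * N) - u i ^ (φ J * N)
        = u i ^ (φ J * N) * (u i ^ ((φ (J + 1) - φ J) * N) - 1) := by
      rw [mul_sub, mul_one, ← pow_add]
      congr 1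
      rw [Nat.sub_mul, Nat.add_sub_cancel' (Nat.mul_le_mul_right N hab.le)]
    have h1 : ‖u i ^ (φ J * N)‖ = 1 := by rw [norm_pow, hu i, one_pow]
    have := hcoord
    rw [hx] at this
    simp only [Complex.dist_eq] at this
    rw [key, norm_mul, h1, one_mul] at this
    exact this

/-- Trace of a power of an endomorphism which is `μ + nilpotent`. -/
lemma aux_trace_pow {M : Type*} [AddCommGroup M] [Module ℂ M] [Module.Finite ℂ M]
    [Module.Free ℂ M] (g : Module.End ℂ M) (μ : ℂ)
    (hg : IsNilpotent (g - algebraMap ℂ (Module.End ℂ M) μ)) (m : ℕ) :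
    LinearMap.trace ℂ M (g ^ m) = (Module.finrank ℂ M : ℂ) * μ ^ m := by
  induction m with
  | zero => simp [LinearMap.trace_one]
  | succ n ih =>
    rw [pow_succ, Module.End.mul_eq_comp,
      LinearMap.trace_comp_eq_mul_of_commute_of_isNilpotent μ ((Commute.refl g).pow_left n) hg,
      ih]
    ring

/-- The trace of `A ^ m` is the weighted sum of `μ ^ m` over generalized eigenspaces. -/
lemma aux_trace_formula {V : Type*} [AddCommGroup V] [Module ℂ V] [FiniteDimensional ℂ V]
    (A : Module.End ℂ V)
    (h_fin : {μ : ℂ | A.maxGenEigenspace μ ≠ ⊥}.Finite) (m : ℕ) :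
    LinearMap.trace ℂ V (A ^ m)
      = ∑ μ ∈ h_fin.toFinset, (Module.finrank ℂ (A.maxGenEigenspace μ) : ℂ) * μ ^ m := by
  classical
  have hds : DirectSum.IsInternal (fun μ : ℂ => A.maxGenEigenspace μ) :=
    DirectSum.isInternal_submodule_of_iSupIndep_of_iSup_eq_top
      A.independent_maxGenEigenspace (Module.End.iSup_maxGenEigenspace_eq_top A)
  have hmaps : ∀ μ : ℂ, MapsTo (A ^ m) (A.maxGenEigenspace μ) (A.maxGenEigenspace μ) :=
    fun μ => Module.End.mapsTo_maxGenEigenspace_of_comm ((Commute.refl A).pow_right m) μ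
  rw [LinearMap.trace_eq_sum_trace_restrict' hds h_fin hmaps]
  refine Finset.sum_congr rfl fun μ hμ => ?_
  have hA1 : ∀ x ∈ A.maxGenEigenspace μ, A x ∈ A.maxGenEigenspace μ :=
    fun x hx => Module.End.mapsTo_maxGenEigenspace_of_comm (Commute.refl A) μ hx
  have e1 : (A ^ m).restrict (hmaps μ) = (A.restrict hA1) ^ m :=
    (Module.End.pow_restrict m hA1).symm
  have e2 : A.restrict hA1 - algebraMap ℂ (Module.End ℂ (A.maxGenEigenspace μ)) μ
      = (A - algebraMap ℂ (Module.End ℂ V) μ).restrict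
        (Module.End.mapsTo_maxGenEigenspace_of_comm
          (Algebra.mul_sub_algebraMap_commutes A μ) μ) := by
    ext x
    simp [LinearMap.restrict_apply, Module.algebraMap_end_apply, LinearMap.restrict_coe_apply]
    rfl
  rw [e1, aux_trace_pow _ μ (by
    rw [e2]
    exact Module.End.isNilpotent_restrict_maxGenEigenspace_sub_algebraMap A μ) m]

/-- Core analytic lemma: if a positive-integer-weighted power sum of complex numbers is
dominated by `C * b m`, then each of the numbers has modulus at most
`limsup (b m) ^ (1/m)`. -/
lemma aux_core (b : ℕ → ℝ) (hb0 : ∀ m, 0 ≤ b m) (C : ℝ) (hC : 0 < C)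
    (s : Finset ℂ) (c : ℂ → ℕ) (hc : ∀ μ ∈ s, 0 < c μ)
    (h : ∀ m : ℕ, 1 ≤ m → ‖∑ μ ∈ s, (c μ : ℂ) * μ ^ m‖ ≤ C * b m)
    (hbdd : IsBoundedUnder (· ≤ ·) atTop (fun m : ℕ => b m ^ ((m : ℝ)⁻¹)))
    {μ0 : ℂ} (hμ0 : μ0 ∈ s) :
    ‖μ0‖ ≤ limsup (fun m : ℕ => b m ^ ((m : ℝ)⁻¹)) atTop := by
  classical
  have hs : s.Nonempty := ⟨μ0, hμ0⟩
  set ρ : ℝ := s.sup' hs (fun μ => ‖μ‖) with hρdef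
  have hμρ : ‖μ0‖ ≤ ρ := Finset.le_sup' _ hμ0
  have hρ0 : 0 ≤ ρ := (norm_nonneg μ0).trans hμρ
  suffices hsuff : ρ ≤ limsup (fun m : ℕ => b m ^ ((m : ℝ)⁻¹)) atTop from hμρ.trans hsuff
  rcases hρ0.eq_or_lt with hρ | hρ
  · rw [← hρ]
    exact le_limsup_of_frequently_le
      (Frequently.of_forall fun m => Real.rpow_nonneg (hb0 m) _) hbdd
  -- now `0 < ρ`
  refine le_of_forall_pos_le_add fun ε hε => ?_
  rw [← sub_le_iff_le_add]
  refine le_limsup_of_frequently_le ?_ hbdd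
  set P : Finset ℂ := s.filter (fun μ => ‖μ‖ = ρ) with hPdef
  set Q : Finset ℂ := s.filter (fun μ => ¬ ‖μ‖ = ρ) with hQdef
  obtain ⟨μmax, hμmaxs, hμmax⟩ := Finset.exists_mem_eq_sup' hs (fun μ => ‖μ‖)
  have hμmaxP : μmax ∈ P := Finset.mem_filter.mpr ⟨hμmaxs, hμmax.symm⟩
  set k : ℕ := ∑ μ ∈ P, c μ with hkdef
  have hk : 0 < k :=
    Finset.sum_pos' (fun μ hμ => Nat.zero_le _) ⟨μmax, hμmaxP, hc μmax hμmaxs⟩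
  have hkR : (0 : ℝ) < (k : ℝ) := by exact_mod_cast hk
  -- small eigenvalues
  have hQlt : ∀ μ ∈ Q, ‖μ‖ < ρ := by
    intro μ hμ
    obtain ⟨hμs, hne⟩ := Finset.mem_filter.mp hμ
    exact lt_of_le_of_ne (Finset.le_sup' _ hμs) hne
  have hQtendsto : Tendsto (fun m : ℕ => ∑ μ ∈ Q, (c μ : ℝ) * (‖μ‖ / ρ) ^ m)
      atTop (nhds 0) := by
    have := tendsto_finset_sum Q (fun μ hμ => by
      have h1 : Tendsto (fun m : ℕ => (‖μ‖ / ρ) ^ m) atTop (nhds 0) :=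
        tendsto_pow_atTop_nhds_zero_of_lt_one (by positivity)
          ((div_lt_one hρ).mpr (hQlt μ hμ))
      simpa using h1.const_mul ((c μ : ℝ)))
    simpa using this
  have ev1 : ∀ᶠ m : ℕ in atTop,
      (∑ μ ∈ Q, (c μ : ℝ) * (‖μ‖ / ρ) ^ m) < (k : ℝ) / 4 :=
    hQtendsto.eventually_lt_const (by positivity)
  set x : ℝ := (k : ℝ) / (2 * C) with hxdef
  have hx0 : 0 < x := by positivity
  have ev2 : ∀ᶠ m : ℕ in atTop, ρ - ε ≤ x ^ ((m : ℝ)⁻¹) * ρ := by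
    have ht : Tendsto (fun m : ℕ => x ^ ((m : ℝ)⁻¹) * ρ) atTop (nhds ρ) := by
      simpa using (aux_tendsto_rpow_inv hx0).mul_const ρ
    exact ht.eventually_const_le (by linarith)
  obtain ⟨N1, hN1⟩ := eventually_atTop.mp (ev1.and ev2)
  rw [frequently_atTop]
  intro N0
  -- pigeonhole step
  obtain ⟨m, hmN, hm⟩ := aux_pigeon (fun μ : {y // y ∈ P} => (μ : ℂ) / (ρ : ℂ))
    (fun μ => by
      rw [norm_div, Complex.norm_of_nonneg hρ.le,
        (Finset.mem_filter.mp μ.2).2, div_self hρ.ne'])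
    (show (0:ℝ) < 1/4 by norm_num) (max (max N0 N1) 1) (le_max_right _ _)
  have hm1 : 1 ≤ m := le_trans (le_max_right _ _) hmN
  have hmN1 : N1 ≤ m := le_trans (le_trans (le_max_right _ _) (le_max_left _ _)) hmN
  have hmN0 : N0 ≤ m := le_trans (le_trans (le_max_left _ _) (le_max_left _ _)) hmN
  obtain ⟨hsmall, hroot⟩ := hN1 m hmN1
  refine ⟨m, hmN0, ?_⟩
  have hρm : (0:ℝ) < ρ ^ m := pow_pos hρ m
  have hρmC : ((ρ : ℂ)) ^ m ≠ 0 := pow_ne_zero m (by exact_mod_cast hρ.ne')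
  -- Step A : each max-modulus term is close to ρ^m
  have keyA : ∀ μ ∈ P, ‖(μ : ℂ) ^ m - (ρ : ℂ) ^ m‖ ≤ (1/4) * ρ ^ m := by
    intro μ hμ
    have hid : (μ : ℂ) ^ m - (ρ : ℂ) ^ m = (ρ : ℂ) ^ m * ((μ / (ρ:ℂ)) ^ m - 1) := by
      rw [div_pow, mul_sub, mul_one, mul_div_cancel₀ _ hρmC]
    rw [hid, norm_mul, norm_pow, Complex.norm_of_nonneg hρ.le, mul_comm]
    exact mul_le_mul_of_nonneg_right (hm ⟨μ, hμ⟩).le hρm.le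
  -- Step B : the sum over P is large
  have hsumP : (3/4 : ℝ) * (k : ℝ) * ρ ^ m
      ≤ ‖∑ μ ∈ P, (c μ : ℂ) * μ ^ m‖ := by
    have hdiff : ‖(∑ μ ∈ P, (c μ : ℂ) * μ ^ m) - (k : ℂ) * (ρ:ℂ) ^ m‖
        ≤ (1/4 : ℝ) * (k : ℝ) * ρ ^ m := by
      have hrw : (∑ μ ∈ P, (c μ : ℂ) * μ ^ m) - (k : ℂ) * (ρ:ℂ) ^ m
          = ∑ μ ∈ P, (c μ : ℂ) * (μ ^ m - (ρ:ℂ) ^ m) := by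
        rw [hkdef]
        push_cast
        rw [Finset.sum_mul, ← Finset.sum_sub_distrib]
        congr 1
        ext μ
        ring
      rw [hrw]
      calc ‖∑ μ ∈ P, (c μ : ℂ) * (μ ^ m - (ρ:ℂ) ^ m)‖
          ≤ ∑ μ ∈ P, ‖(c μ : ℂ) * (μ ^ m - (ρ:ℂ) ^ m)‖ :=
            norm_sum_le _ _
        _ ≤ ∑ μ ∈ P, (c μ : ℝ) * ((1/4) * ρ ^ m) := by
            refine Finset.sum_le_sum fun μ hμ => ?_
            rw [norm_mul, Complex.norm_natCast]
            exact mul_le_mul_of_nonneg_left (keyA μ hμ) (Nat.cast_nonneg _)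
        _ = (1/4 : ℝ) * (k : ℝ) * ρ ^ m := by
            rw [← Finset.sum_mul, hkdef]
            push_cast
            ring
    have habs : ‖(k : ℂ) * (ρ:ℂ) ^ m‖ = (k : ℝ) * ρ ^ m := by
      rw [norm_mul, norm_pow, Complex.norm_natCast, Complex.norm_of_nonneg hρ.le]
    have htri := norm_sub_norm_le ((k : ℂ) * (ρ:ℂ) ^ m)
      (∑ μ ∈ P, (c μ : ℂ) * μ ^ m)
    rw [norm_sub_rev, habs] at htri
    linarith
  -- Step C : the sum over Q is small
  have hsumQ : ‖∑ μ ∈ Q, (c μ : ℂ) * μ ^ m‖ ≤ (1/4 : ℝ) * (k : ℝ) * ρ ^ m := by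
    calc ‖∑ μ ∈ Q, (c μ : ℂ) * μ ^ m‖
        ≤ ∑ μ ∈ Q, ‖(c μ : ℂ) * μ ^ m‖ := norm_sum_le _ _
      _ = ∑ μ ∈ Q, (c μ : ℝ) * (‖μ‖ / ρ) ^ m * ρ ^ m := by
          refine Finset.sum_congr rfl fun μ hμ => ?_
          rw [norm_mul, norm_pow, Complex.norm_natCast, div_pow,
            mul_assoc, div_mul_cancel₀ _ hρm.ne']
      _ = (∑ μ ∈ Q, (c μ : ℝ) * (‖μ‖ / ρ) ^ m) * ρ ^ m := by
          rw [Finset.sum_mul]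
      _ ≤ ((k : ℝ) / 4) * ρ ^ m := mul_le_mul_of_nonneg_right hsmall.le hρm.le
      _ = (1/4 : ℝ) * (k : ℝ) * ρ ^ m := by ring
  -- Step D : the total sum is large
  have hsplit : (∑ μ ∈ P, (c μ : ℂ) * μ ^ m) + (∑ μ ∈ Q, (c μ : ℂ) * μ ^ m)
      = ∑ μ ∈ s, (c μ : ℂ) * μ ^ m := by
    rw [hPdef, hQdef]
    exact Finset.sum_filter_add_sum_filter_not s _ _
  have htotal : ((k : ℝ) / 2) * ρ ^ m ≤ ‖∑ μ ∈ s, (c μ : ℂ) * μ ^ m‖ := by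
    have h1 := norm_sub_norm_le (∑ μ ∈ P, (c μ : ℂ) * μ ^ m)
      (- ∑ μ ∈ Q, (c μ : ℂ) * μ ^ m)
    rw [sub_neg_eq_add, hsplit, norm_neg] at h1
    linarith
  -- Step E : conclude
  have hbm : x * ρ ^ m ≤ b m := by
    have hb := h m hm1
    rw [hxdef, div_mul_eq_mul_div, div_le_iff₀ (by positivity : (0:ℝ) < 2 * C)]
    nlinarith
  have hrpow := Real.rpow_le_rpow (by positivity) hbm (by positivity : (0:ℝ) ≤ (m:ℝ)⁻¹)
  rw [Real.mul_rpow hx0.le (pow_nonneg hρ0 m),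
    Real.pow_rpow_inv_natCast hρ0 (by omega : m ≠ 0)] at hrpow
  linarith


end Aux

/-- Let `A` be a linear endomorphism of a nontrivial finite-dimensional
complex vector space and `B` a (continuous) linear endomorphism of a finite-dimensional
normed real vector space, and suppose there is `C > 0` with `|tr(A^m)| ≤ C * ‖B^m‖` for all
`m ≥ 1`. Then every (complex) eigenvalue `μ` of `A` satisfies
`|μ| ≤ limsup_{m→∞} ‖B^m‖^{1/m}`, i.e. the spectral radius of `A` is at most this limsup. -/
theorem stmt7 {V : Type*} [AddCommGroup V] [Module ℂ V] [FiniteDimensional ℂ V] [Nontrivial V]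
    {W : Type*} [NormedAddCommGroup W] [NormedSpace ℝ W] [FiniteDimensional ℝ W]
    (A : V →ₗ[ℂ] V) (B : W →L[ℝ] W) (C : ℝ) (hC : 0 < C)
    (hbound : ∀ m : ℕ, 1 ≤ m →
      ‖LinearMap.trace ℂ V (A ^ m)‖ ≤ C * ‖B ^ m‖) :
    ∀ μ : ℂ, Module.End.HasEigenvalue A μ →
      ‖μ‖ ≤
        Filter.limsup (fun m : ℕ => ‖B ^ m‖ ^ ((m : ℝ)⁻¹)) Filter.atTop := by
  
  intro μ0 hμ0
  classical
  have h_fin : {μ : ℂ | Module.End.maxGenEigenspace A μ ≠ ⊥}.Finite :=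
    WellFoundedGT.finite_ne_bot_of_iSupIndep (Module.End.independent_maxGenEigenspace A)
  have hμ0fin : μ0 ∈ h_fin.toFinset := by
    rw [Set.Finite.mem_toFinset]
    intro hbot
    exact hμ0 (le_bot_iff.mp (hbot ▸ (Module.End.genEigenspace A μ0).mono le_top))
  have hbdd : IsBoundedUnder (· ≤ ·) atTop (fun m : ℕ => ‖B ^ m‖ ^ ((m : ℝ)⁻¹)) := by
    refine isBoundedUnder_of ⟨max ‖B‖ 1, fun m => ?_⟩
    rcases Nat.eq_zero_or_pos m with hm | hm
    · subst hm
      simp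
    · have h1 : ‖B ^ m‖ ≤ (max ‖B‖ 1) ^ m :=
        (norm_pow_le' B hm).trans (pow_le_pow_left₀ (norm_nonneg B) (le_max_left _ _) m)
      have h2 := Real.rpow_le_rpow (norm_nonneg _) h1
        (by positivity : (0:ℝ) ≤ (m : ℝ)⁻¹)
      rwa [Real.pow_rpow_inv_natCast (le_trans zero_le_one (le_max_right _ _)) hm.ne'] at h2
  refine aux_core (fun m => ‖B ^ m‖) (fun m => norm_nonneg _) C hC h_fin.toFinset
    (fun μ => Module.finrank ℂ (Module.End.maxGenEigenspace A μ)) ?_ ?_ hbdd hμ0fin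
  · intro μ hμ
    rw [Set.Finite.mem_toFinset] at hμ
    exact Nat.pos_of_ne_zero fun h0 => hμ (Submodule.finrank_eq_zero.mp h0)
  · intro m hm
    rw [← aux_trace_formula A h_fin m]
    exact hbound m hm
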